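/- If 0 ≤ ε < r·cos θ, then the complement ℝ² \ S_ε of the closed ε-neighborhood of the arc is a connected set. -/

import Mathlib

lemma arc_dot (r c s a b c' d' : ℝ) (hr : 0 < r) (hc : 0 < c) (hs : 0 < s)
    (hcs : c^2 + s^2 = 1) (hcirc : c'^2 + d'^2 = r^2) (hd : d' ≤ r*s)
    (hsec : |a| * s ≤ b*c) : a * c' + b * d' ≤ r*(|a| * c + b*s) := by
  have hb : 0 ≤ b := by nlinarith [abs_nonneg a]
  have hac : a * c' ≤ |a| * |c'| := by
    calc a * c' ≤ |a * c'| := le_abs_self _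
    _ = |a| * |c'| := abs_mul _ _
  rcases le_or_gt |c'| (r*c) with h1 | h1
  · nlinarith [abs_nonneg a]
  · have h2 : r^2*c^2 < c'^2 := by
      have := pow_lt_pow_left₀ h1 (le_of_lt (mul_pos hr hc)) (n := 2) (by norm_num)
      rw [sq_abs] at this; nlinarith
    have hd' : |d'| < r*s := by
      have h3 : d'^2 < r^2*s^2 := by nlinarith
      nlinarith [sq_abs d', abs_nonneg d', mul_pos hr hs, sq_nonneg (|d'| - r*s)]
    have hCS : c*|c'| + s*|d'| ≤ r := by
      have h0 : 0 ≤ c*|c'| + s*|d'| := by positivity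
      nlinarith [sq_nonneg (c*|d'| - s*|c'|), sq_abs c', sq_abs d']
    have key : s*(a * c' + b * d') ≤ s*(r*(|a| * c + b*s)) := by
      have e1 : s*|a| * (|c'| - r*c) ≤ b*c*(|c'| - r*c) := by nlinarith
      have e2' : c*|c'| - r*c^2 ≤ s*(r*s) - s*d' := by nlinarith [le_abs_self d']
      have e2 : b*(c*|c'| - r*c^2) ≤ b*(s*(r*s) - s*d') := by
        exact mul_le_mul_of_nonneg_left e2' hb
      nlinarith
    exact le_of_mul_le_mul_left (by linarith [key]) hs
-- in the sector, distance to arc point is at least distance to one of the endpoints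
lemma arc_key1 (r c s a b c' d' : ℝ) (hr : 0 < r) (hc : 0 < c) (hs : 0 < s)
    (hcs : c^2 + s^2 = 1) (hcirc : c'^2 + d'^2 = r^2) (hd : d' ≤ r*s)
    (hsec : |a| * s ≤ b*c) :
    (a - r*c)^2 + (b - r*s)^2 ≤ (a - c')^2 + (b - d')^2 ∨
    (a + r*c)^2 + (b - r*s)^2 ≤ (a - c')^2 + (b - d')^2 := by
  have hdot := arc_dot r c s a b c' d' hr hc hs hcs hcirc hd hsec
  rcases le_or_gt 0 a with ha | ha
  · left; rw [abs_of_nonneg ha] at hdot; nlinarith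
  · right; rw [abs_of_neg ha] at hdot; nlinarith

-- scaling inward stays away from an endpoint (lower region b ≤ r*s)
lemma arc_key2 (r c s ε a b t : ℝ) (hr : 0 < r) (hc : 0 < c) (hs : 0 < s)
    (hcs : c^2 + s^2 = 1) (hε0 : 0 ≤ ε) (hε : ε < r*c)
    (hsec : |a| * s ≤ b*c) (hb : b ≤ r*s)
    (hdist : ε^2 < (a - r*c)^2 + (b - r*s)^2)
    (ht0 : 0 ≤ t) (ht1 : t ≤ 1) :
    ε^2 < (t*a - r*c)^2 + (t*b - r*s)^2 := by
  have hb0 : 0 ≤ b := by nlinarith [abs_nonneg a]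
  have harc : a ≤ r*c := by nlinarith [le_abs_self a, mul_pos hc hs]
  have h6 : ε^2 < r^2*c^2 := by
    nlinarith [mul_le_mul_of_nonneg_left hε.le hε0, mul_lt_mul_of_pos_right hε (mul_pos hr hc)]
  have hc1 : c^2 ≤ 1 := by nlinarith [sq_nonneg s]
  obtain ⟨N, hN⟩ : ∃ N, N = a^2 + b^2 := ⟨_, rfl⟩
  obtain ⟨D, hD⟩ : ∃ D, D = r*(a*c + b*s) := ⟨_, rfl⟩
  have hN0 : 0 ≤ N := by rw [hN]; positivity
  have hg : (t*a - r*c)^2 + (t*b - r*s)^2 = t^2*N - 2*t*D + r^2 := by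
    rw [hN, hD]; linear_combination r^2 * hcs
  have h1 : (a - r*c)^2 + (b - r*s)^2 = N - 2*D + r^2 := by
    rw [hN, hD]; linear_combination r^2 * hcs
  rw [hg]
  rcases le_or_gt D 0 with hD0 | hD0
  · have e1 : 0 ≤ t^2*N := mul_nonneg (sq_nonneg t) hN0
    have e2 : 0 ≤ t*(-D) := mul_nonneg ht0 (by linarith)
    nlinarith
  rcases le_or_gt N D with hND | hND
  · have h12 : (t+1)*N ≤ 2*D := by nlinarith [mul_le_mul_of_nonneg_right ht1 hN0]
    have h13 : 0 ≤ (1-t)*(2*D - (t+1)*N) := mul_nonneg (by linarith) (by linarith)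
    have hd2 : ε^2 < N - 2*D + r^2 := h1 ▸ hdist
    linarith [h13, hd2]
  · -- dip case
    have hND' : r*(a*c) + r*(b*s) < a^2 + b^2 := by rw [hN, hD] at hND; linarith
    have hb2 : b^2 ≤ r*(b*s) := by linarith [mul_nonneg hb0 (sub_nonneg.2 hb)]
    have h2 : r*(a*c) < a^2 := by linarith
    have haneg : a < 0 := by
      rcases le_or_gt 0 a with ha | ha
      · exfalso; linarith [mul_le_mul_of_nonneg_left harc ha]
      · exact ha
    have h10 : 0 < a*c + b*s := by
      by_contra h; push_neg at h
      have := mul_nonpos_of_nonneg_of_nonpos hr.le h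
      rw [hD] at hD0; linarith
    have hioc : (-a)*c < b*s := by linarith
    have hbsc : 0 ≤ b*s*c := mul_nonneg (mul_nonneg hb0 hs.le) hc.le
    have hcross : 2*(a*b*s*c) ≤ a^2*(s^2 - c^2) := by
      rcases le_or_gt (c^2) (s^2) with hcs2 | hcs2
      · have t1 : 0 ≤ ((-a)*b)*s*c :=
          mul_nonneg (mul_nonneg (mul_nonneg (by linarith) hb0) hs.le) hc.le
        have t2 : 0 ≤ a^2*(s^2 - c^2) := mul_nonneg (sq_nonneg a) (by linarith)
        linarith [t1, t2]
      · have h9 : ((-a)*c)*c ≤ (b*s)*c := mul_le_mul_of_nonneg_right hioc.le hc.le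
        have t3 : 0 ≤ (-a)*s^2 := mul_nonneg (by linarith) (sq_nonneg s)
        have hchain : (-a)*(c^2 - s^2) ≤ 2*(b*s*c) := by linarith [h9, t3, hbsc]
        linarith [mul_le_mul_of_nonneg_left hchain (neg_nonneg.2 haneg.le)]
    have hcross2 : c^2*N ≤ (a*s - b*c)^2 := by rw [hN]; linarith [hcross]
    have hNpos : 0 < N := lt_of_lt_of_le hD0 hND.le
    have h5 : r^2*N - D^2 = r^2*(a*s - b*c)^2 := by
      rw [hN, hD]; linear_combination (-(r^2)*(a^2+b^2)) * hcs
    have hrN : ε^2 * N < r^2*N - D^2 := by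
      calc ε^2*N < (r^2*c^2)*N := mul_lt_mul_of_pos_right h6 hNpos
      _ ≤ r^2*(a*s-b*c)^2 := by linarith [mul_le_mul_of_nonneg_left hcross2 (sq_nonneg r)]
      _ = r^2*N - D^2 := h5.symm
    by_contra hgl
    push_neg at hgl
    have h8 := mul_le_mul_of_nonneg_right hgl hN0
    have h7 : (t^2*N - 2*t*D + r^2)*N = (t*N - D)^2 + (r^2*N - D^2) := by ring
    linarith [sq_nonneg (t*N - D), h7, h8, hrN]
open Metric Set

noncomputable section

abbrev E2 := EuclideanSpace ℝ (Fin 2)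

lemma e2_norm_sq (p : E2) : ‖p‖^2 = (p 0)^2 + (p 1)^2 := by
  rw [EuclideanSpace.norm_eq, Real.sq_sqrt (by positivity)]
  simp [Fin.sum_univ_two, sq_abs]

lemma e2_dist_sq (p q : E2) : dist p q ^ 2 = (p 0 - q 0)^2 + (p 1 - q 1)^2 := by
  rw [dist_eq_norm, e2_norm_sq]
  simp [PiLp.sub_apply]

lemma arc_sq_le (x y : ℝ) (h : x^2 ≤ y^2) (hy : 0 ≤ y) : x ≤ y := by
  by_contra h'; push_neg at h'
  have := pow_lt_pow_left₀ h' hy (n := 2) (by norm_num)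
  linarith

lemma arc_sq_lt (x y : ℝ) (h : x^2 < y^2) (hy : 0 ≤ y) : x < y :=
  lt_of_pow_lt_pow_left₀ 2 hy h

lemma arc_sq_eq (x y : ℝ) (hx : 0 ≤ x) (hy : 0 ≤ y) (h : x^2 = y^2) : x = y := by
  have h2 : (x - y)*(x + y) = 0 := by linear_combination h
  rcases mul_eq_zero.1 h2 with h3 | h3 <;> linarith

lemma arc_seg_joined (s : Set E2) (x y : E2) (h : segment ℝ x y ⊆ s) : JoinedIn s x y :=
  (((convex_segment x y).isPathConnected ⟨x, left_mem_segment ℝ x y⟩).joinedIn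
    x (left_mem_segment ℝ x y) y (right_mem_segment ℝ x y)).mono h

lemma arc_rank : 1 < Module.rank ℝ E2 := by
  have h2 : (Module.finrank ℝ E2 : Cardinal) = Module.rank ℝ E2 := Module.finrank_eq_rank ℝ E2
  rw [finrank_euclideanSpace_fin] at h2
  rw [← h2]
  exact_mod_cast one_lt_two

lemma arc_outer_preconnected (R : ℝ) (hR : 0 ≤ R) : IsPreconnected {p : E2 | R < ‖p‖} := by
  have heq : {p : E2 | R < ‖p‖} =
      (fun x : ℝ × E2 => x.1 • x.2) '' ((Set.Ioi R) ×ˢ (Metric.sphere (0:E2) 1)) := by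
    ext p
    simp only [Set.mem_setOf_eq, Set.mem_image, Set.mem_prod, Set.mem_Ioi,
      mem_sphere_zero_iff_norm, Prod.exists]
    constructor
    · intro hp
      have hp0 : ‖p‖ ≠ 0 := (lt_of_le_of_lt hR hp).ne'
      refine ⟨‖p‖, ‖p‖⁻¹ • p, ⟨hp, ?_⟩, ?_⟩
      · rw [norm_smul, norm_inv, norm_norm]
        field_simp
      · rw [smul_smul, mul_inv_cancel₀ hp0, one_smul]
    · rintro ⟨t, u, ⟨ht, hu⟩, rfl⟩
      rw [norm_smul, hu, mul_one, Real.norm_eq_abs]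
      exact lt_of_lt_of_le ht (le_abs_self t)
  rw [heq]
  exact IsPreconnected.image ((isPreconnected_Ioi).prod (isPreconnected_sphere arc_rank 0 1))
    _ (continuous_fst.smul continuous_snd).continuousOn

lemma arc_seg_mem {x y z : E2} (h : z ∈ segment ℝ x y) :
    ∃ t : ℝ, 0 ≤ t ∧ t ≤ 1 ∧ z 0 = (1-t)*(x 0) + t*(y 0) ∧ z 1 = (1-t)*(x 1) + t*(y 1) := by
  rw [segment_eq_image] at h
  obtain ⟨t, ⟨ht0, ht1⟩, rfl⟩ := h
  refine ⟨t, ht0, ht1, ?_, ?_⟩ <;>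
    simp [PiLp.add_apply, PiLp.smul_apply, smul_eq_mul]

end

lemma arc_lt_aux (ε R x : ℝ) (h : ε^2 < R) : ε^2 < R + x^2 := by nlinarith [sq_nonneg x]

lemma arc_lt_aux' (ε R x : ℝ) (h : ε^2 < R) : ε^2 < x^2 + R := by nlinarith [sq_nonneg x]

lemma arc_b_nonneg (c s b A : ℝ) (hc : 0 < c) (hA : 0 ≤ A) (hs : 0 ≤ s) (h : A*s ≤ b*c) :
    0 ≤ b := by nlinarith

lemma arc_shrink (u b m : ℝ) (hu1 : u ≤ 1) (hb : 0 ≤ b) (hm : b ≤ m) : u*b ≤ m := by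
  nlinarith

lemma arc_up (t y H : ℝ) (ht0 : 0 ≤ t) (h : y ≤ H) : y ≤ (1-t)*y + t*H := by nlinarith

lemma arc_down (t H m : ℝ) (ht1 : t ≤ 1) (h : m ≤ H) : m ≤ (1-t)*H + t*m := by nlinarith

lemma arc_sq_mono (x y : ℝ) (h0 : 0 ≤ x) (h : x ≤ y) : x^2 ≤ y^2 := by nlinarith

lemma arc_eps_sq (ε d : ℝ) (hε0 : 0 ≤ ε) (h : ε + 1 ≤ d) : ε^2 < d^2 := by nlinarith

lemma arc_cover_height (c s a b n : ℝ) (hc : 0 < c) (hs : 0 < s) (hcs : c^2 + s^2 = 1)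
    (hn : a^2 + b^2 = n^2) (hn0 : 0 < n) (hcon : b*c < |a| * s) : b ≤ n*s := by
  rcases le_or_gt b 0 with h0 | h0
  · nlinarith [mul_nonneg hn0.le hs.le]
  · have habs : 0 ≤ b * c := mul_nonneg h0.le hc.le
    have hsq : (b*c)^2 < (|a| * s)^2 :=
      pow_lt_pow_left₀ hcon habs (n := 2) (by norm_num)
    have h4 : b^2*c^2 < a^2*s^2 := by
      have h5 : (|a| * s)^2 = a^2*s^2 := by rw [mul_pow, sq_abs]
      nlinarith
    have h6 : b^2 < (n*s)^2 := by nlinarith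
    exact (arc_sq_lt b (n*s) h6 (mul_nonneg hn0.le hs.le)).le

lemma arc_basic (r c s ε : ℝ) (hr : 0 < r) (hc : 0 < c) (hs : 0 < s) (hcs : c^2 + s^2 = 1)
    (hε0 : 0 ≤ ε) (hε : ε < r*c) :
    c < 1 ∧ ε < r ∧ ε^2 < r^2*c^2 ∧ r*s ≤ r := by
  have hc1 : c < 1 := by nlinarith [mul_pos hs hs, sq_nonneg (c-1), sq_nonneg (c+1)]
  have hs1 : s < 1 := by nlinarith [mul_pos hc hc, sq_nonneg (s-1), sq_nonneg (s+1)]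
  refine ⟨hc1, by nlinarith [mul_pos hr (sub_pos.2 hc1)], ?_, by nlinarith [mul_pos hr (sub_pos.2 hs1)]⟩
  nlinarith [mul_le_mul_of_nonneg_left hε.le hε0, mul_lt_mul_of_pos_right hε (mul_pos hr hc)]

set_option maxHeartbeats 1000000 in
/-- If `0 ≤ ε < r·cos θ`, then the complement of the closed
`ε`-neighborhood of the circular arc is connected. -/
theorem arc_complement_connected_before_birth
    (r θ ε : ℝ) (hr : 0 < r) (hθ : θ ∈ Set.Ioo 0 (Real.pi / 2))
    (S : Set (EuclideanSpace ℝ (Fin 2)))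
    (hS : S = {p : EuclideanSpace ℝ (Fin 2) | ‖p‖ = r ∧ p 1 ≤ r * Real.sin θ})
    (hε0 : 0 ≤ ε) (hε : ε < r * Real.cos θ) :
    IsConnected (Metric.cthickening ε S)ᶜ := by
  obtain ⟨hθ0, hθ2⟩ := hθ
  have hπ : 0 < Real.pi := Real.pi_pos
  set c := Real.cos θ with hcdef
  set s := Real.sin θ with hsdef
  have hc : 0 < c := Real.cos_pos_of_mem_Ioo ⟨by linarith, hθ2⟩
  have hs : 0 < s := Real.sin_pos_of_pos_of_lt_pi hθ0 (by linarith)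
  have hcs : c^2 + s^2 = 1 := by rw [hcdef, hsdef]; exact Real.cos_sq_add_sin_sq θ
  obtain ⟨hc1, hεr, hε2, hrs⟩ := arc_basic r c s ε hr hc hs hcs hε0 hε
  -- endpoints of the arc
  obtain ⟨ep, hepd⟩ : ∃ p : E2, p = WithLp.toLp 2 ![r*c, r*s] := ⟨_, rfl⟩
  obtain ⟨em, hemd⟩ : ∃ p : E2, p = WithLp.toLp 2 ![-(r*c), r*s] := ⟨_, rfl⟩
  have hep0 : ep 0 = r*c := by rw [hepd]; rfl
  have hep1 : ep 1 = r*s := by rw [hepd]; rfl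
  have hem0 : em 0 = -(r*c) := by rw [hemd]; rfl
  have hem1 : em 1 = r*s := by rw [hemd]; rfl
  have hepS : ep ∈ S := by
    rw [hS]
    refine ⟨arc_sq_eq _ _ (norm_nonneg _) hr.le ?_, by rw [hep1]⟩
    rw [e2_norm_sq, hep0, hep1]; linear_combination r^2 * hcs
  have hemS : em ∈ S := by
    rw [hS]
    refine ⟨arc_sq_eq _ _ (norm_nonneg _) hr.le ?_, by rw [hem1]⟩
    rw [e2_norm_sq, hem0, hem1]; linear_combination r^2 * hcs
  -- membership criteria for the complement
  have notinX : ∀ (p : E2) (δ : ℝ), ε < δ → (∀ q ∈ S, δ ≤ dist p q) →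
      p ∈ (Metric.cthickening ε S)ᶜ := by
    intro p δ hδ h
    rw [Set.mem_compl_iff]
    intro hmem
    have h2 := Metric.cthickening_subset_thickening' (lt_of_le_of_lt hε0 hδ) hδ S hmem
    rw [Metric.mem_thickening_iff] at h2
    obtain ⟨z, hz1, hz2⟩ := h2
    exact absurd (h z hz1) (not_le.2 hz2)
  have distX : ∀ p ∈ (Metric.cthickening ε S)ᶜ, ∀ q ∈ S, ε < dist p q := by
    intro p hp q hq
    rw [Set.mem_compl_iff] at hp
    by_contra h
    push_neg at h
    exact hp (Metric.closedBall_subset_cthickening hq ε (Metric.mem_closedBall.2 h))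
  -- the four pieces
  set A : Set E2 := Metric.ball (0:E2) (r - ε) with hAdef
  set C : Set E2 := {p : E2 | r + ε < ‖p‖} with hCdef
  set M1 : Set E2 := {p : E2 | |p 0| * s ≤ p 1 * c ∧ p 1 ≤ r*s ∧
      ε^2 < (p 0 - r*c)^2 + (p 1 - r*s)^2 ∧ ε^2 < (p 0 + r*c)^2 + (p 1 - r*s)^2} with hM1def
  set M2 : Set E2 := {p : E2 | |p 0| * s ≤ p 1 * c ∧ r*s ≤ p 1 ∧
      ε^2 < (p 0 - r*c)^2 + (p 1 - r*s)^2 ∧ ε^2 < (p 0 + r*c)^2 + (p 1 - r*s)^2} with hM2def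
  -- pieces are inside the complement
  have hAX : A ⊆ (Metric.cthickening ε S)ᶜ := by
    intro p hp
    rw [hAdef, mem_ball_zero_iff] at hp
    apply notinX p (r - ‖p‖) (by linarith)
    intro q hq
    rw [hS] at hq
    calc r - ‖p‖ = ‖q‖ - ‖p‖ := by rw [hq.1]
    _ ≤ ‖q - p‖ := norm_sub_norm_le q p
    _ = dist p q := by rw [dist_eq_norm, norm_sub_rev]
  have hCX : C ⊆ (Metric.cthickening ε S)ᶜ := by
    intro p hp
    rw [hCdef, Set.mem_setOf_eq] at hp
    apply notinX p (‖p‖ - r) (by linarith)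
    intro q hq
    rw [hS] at hq
    calc ‖p‖ - r = ‖p‖ - ‖q‖ := by rw [hq.1]
    _ ≤ ‖p - q‖ := norm_sub_norm_le p q
    _ = dist p q := (dist_eq_norm p q).symm
  have hsector : ∀ p : E2, |p 0| * s ≤ p 1 * c →
      ε^2 < (p 0 - r*c)^2 + (p 1 - r*s)^2 → ε^2 < (p 0 + r*c)^2 + (p 1 - r*s)^2 →
      p ∈ (Metric.cthickening ε S)ᶜ := by
    intro p h1 h2 h3
    have hdp : ε < dist p ep :=
      arc_sq_lt _ _ (by rw [e2_dist_sq, hep0, hep1]; exact h2) dist_nonneg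
    have hdm : ε < dist p em := by
      refine arc_sq_lt _ _ ?_ dist_nonneg
      rw [e2_dist_sq, hem0, hem1]
      have heq : (p 0 - -(r*c))^2 = (p 0 + r*c)^2 := by ring
      rw [heq]; exact h3
    apply notinX p (min (dist p ep) (dist p em)) (lt_min hdp hdm)
    intro q hq
    rw [hS] at hq
    obtain ⟨hqn, hq1⟩ := hq
    have hqc : (q 0)^2 + (q 1)^2 = r^2 := by rw [← e2_norm_sq, hqn]
    rcases arc_key1 r c s (p 0) (p 1) (q 0) (q 1) hr hc hs hcs hqc hq1 h1 with h | h
    · refine le_trans (min_le_left _ _) (arc_sq_le _ _ ?_ dist_nonneg)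
      rw [e2_dist_sq, e2_dist_sq, hep0, hep1]; exact h
    · refine le_trans (min_le_right _ _) (arc_sq_le _ _ ?_ dist_nonneg)
      rw [e2_dist_sq, e2_dist_sq, hem0, hem1]
      have heq : (p 0 - -(r*c))^2 = (p 0 + r*c)^2 := by ring
      rw [heq]; exact h
  have hM1X : M1 ⊆ (Metric.cthickening ε S)ᶜ := by
    intro p hp
    rw [hM1def, Set.mem_setOf_eq] at hp
    exact hsector p hp.1 hp.2.2.1 hp.2.2.2
  have hM2X : M2 ⊆ (Metric.cthickening ε S)ᶜ := by
    intro p hp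
    rw [hM2def, Set.mem_setOf_eq] at hp
    exact hsector p hp.1 hp.2.2.1 hp.2.2.2
  -- the complement is covered by the pieces
  have hcover : (Metric.cthickening ε S)ᶜ ⊆ A ∪ (M1 ∪ M2) ∪ C := by
    intro p hp
    rcases lt_or_ge ‖p‖ (r - ε) with h | hge
    · exact Or.inl (Or.inl (by rw [hAdef, mem_ball_zero_iff]; exact h))
    rcases lt_or_ge (r + ε) ‖p‖ with h | hle
    · exact Or.inr (by rw [hCdef, Set.mem_setOf_eq]; exact h)
    have hp0 : 0 < ‖p‖ := by linarith
    have hnsq : (p 0)^2 + (p 1)^2 = ‖p‖^2 := (e2_norm_sq p).symm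
    have hdp := distX p hp ep hepS
    have hdm := distX p hp em hemS
    have hdp2 : ε^2 < (p 0 - r*c)^2 + (p 1 - r*s)^2 := by
      have h4 := pow_lt_pow_left₀ hdp hε0 (n := 2) (by norm_num)
      rwa [e2_dist_sq, hep0, hep1] at h4
    have hdm2 : ε^2 < (p 0 + r*c)^2 + (p 1 - r*s)^2 := by
      have h4 := pow_lt_pow_left₀ hdm hε0 (n := 2) (by norm_num)
      rw [e2_dist_sq, hem0, hem1] at h4
      have heq : (p 0 - -(r*c))^2 = (p 0 + r*c)^2 := by ring
      rwa [heq] at h4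
    have hsec : |p 0| * s ≤ p 1 * c := by
      by_contra hcon
      push_neg at hcon
      have hb1 : p 1 ≤ ‖p‖ * s := arc_cover_height c s (p 0) (p 1) ‖p‖ hc hs hcs hnsq hp0 hcon
      obtain ⟨q0, hq0⟩ : ∃ q0 : E2, q0 = (r / ‖p‖) • p := ⟨_, rfl⟩
      have hq01 : q0 1 = (r / ‖p‖) * p 1 := by rw [hq0]; rfl
      have hq0S : q0 ∈ S := by
        rw [hS]
        constructor
        · rw [hq0, norm_smul, Real.norm_eq_abs, abs_of_pos (div_pos hr hp0),
            div_mul_cancel₀ _ hp0.ne']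
        · rw [hq01]
          have h5 : (r / ‖p‖) * p 1 ≤ (r / ‖p‖) * (‖p‖ * s) :=
            mul_le_mul_of_nonneg_left hb1 (div_pos hr hp0).le
          have h6 : (r / ‖p‖) * (‖p‖ * s) = r * s := by field_simp
          linarith
      have hqd : dist p q0 ≤ ε := by
        have hsub : p - q0 = (1 - r/‖p‖) • p := by rw [hq0, sub_smul, one_smul]
        have h7 : dist p q0 = |1 - r/‖p‖| * ‖p‖ := by
          rw [dist_eq_norm, hsub, norm_smul, Real.norm_eq_abs]
        have h8 : |1 - r/‖p‖| * ‖p‖ = |‖p‖ - r| := by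
          have e : (1 - r/‖p‖) * ‖p‖ = ‖p‖ - r := by
            rw [sub_mul, one_mul, div_mul_cancel₀ _ hp0.ne']
          calc |1 - r/‖p‖| * ‖p‖ = |1 - r/‖p‖| * |‖p‖| := by rw [abs_of_pos hp0]
          _ = |(1 - r/‖p‖) * ‖p‖| := (abs_mul _ _).symm
          _ = |‖p‖ - r| := by rw [e]
        rw [h7, h8]
        exact abs_le.mpr ⟨by linarith, by linarith⟩
      exact absurd (distX p hp q0 hq0S) (not_lt.2 hqd)
    rcases le_total (p 1) (r*s) with h9 | h9
    · refine Or.inl (Or.inr (Or.inl ?_))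
      rw [hM1def, Set.mem_setOf_eq]
      exact ⟨hsec, h9, hdp2, hdm2⟩
    · refine Or.inl (Or.inr (Or.inr ?_))
      rw [hM2def, Set.mem_setOf_eq]
      exact ⟨hsec, h9, hdp2, hdm2⟩
  -- distinguished points
  have hcc : ε^2 < r^2*c^2 := hε2
  have h0M1 : (0:E2) ∈ M1 := by
    rw [hM1def, Set.mem_setOf_eq]
    have hz0 : (0:E2) 0 = 0 := rfl
    have hz1 : (0:E2) 1 = 0 := rfl
    rw [hz0, hz1]
    refine ⟨by rw [abs_zero, zero_mul, zero_mul], by positivity, ?_, ?_⟩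
    · have heq : (0 - r*c)^2 + ((0:ℝ) - r*s)^2 = r^2*c^2 + (r*s)^2 := by ring
      rw [heq]; exact arc_lt_aux ε _ _ hcc
    · have heq : (0 + r*c)^2 + ((0:ℝ) - r*s)^2 = r^2*c^2 + (r*s)^2 := by ring
      rw [heq]; exact arc_lt_aux ε _ _ hcc
  have h0A : (0:E2) ∈ A := by
    rw [hAdef]
    exact mem_ball_self (by linarith)
  obtain ⟨zmid, hzmidd⟩ : ∃ p : E2, p = WithLp.toLp 2 ![0, r*s] := ⟨_, rfl⟩
  have hzmid0 : zmid 0 = 0 := by rw [hzmidd]; rfl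
  have hzmid1 : zmid 1 = r*s := by rw [hzmidd]; rfl
  have hzmidsec : |zmid 0| * s ≤ zmid 1 * c := by
    rw [hzmid0, hzmid1, abs_zero, zero_mul]
    positivity
  have hzmiddist1 : ε^2 < (zmid 0 - r*c)^2 + (zmid 1 - r*s)^2 := by
    rw [hzmid0, hzmid1]
    have heq : (0 - r*c)^2 + (r*s - r*s)^2 = r^2*c^2 + 0^2 := by ring
    rw [heq]; exact arc_lt_aux ε _ _ hcc
  have hzmiddist2 : ε^2 < (zmid 0 + r*c)^2 + (zmid 1 - r*s)^2 := by
    rw [hzmid0, hzmid1]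
    have heq : (0 + r*c)^2 + (r*s - r*s)^2 = r^2*c^2 + 0^2 := by ring
    rw [heq]; exact arc_lt_aux ε _ _ hcc
  have hzmidM1 : zmid ∈ M1 := by
    rw [hM1def, Set.mem_setOf_eq]
    exact ⟨hzmidsec, by rw [hzmid1], hzmiddist1, hzmiddist2⟩
  have hzmidM2 : zmid ∈ M2 := by
    rw [hM2def, Set.mem_setOf_eq]
    exact ⟨hzmidsec, by rw [hzmid1], hzmiddist1, hzmiddist2⟩
  obtain ⟨ztop, hztopd⟩ : ∃ p : E2, p = WithLp.toLp 2 ![0, r+ε+1] := ⟨_, rfl⟩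
  have hztop0 : ztop 0 = 0 := by rw [hztopd]; rfl
  have hztop1 : ztop 1 = r+ε+1 := by rw [hztopd]; rfl
  have hztopM2 : ztop ∈ M2 := by
    rw [hM2def, Set.mem_setOf_eq, hztop0, hztop1]
    refine ⟨by rw [abs_zero, zero_mul]; positivity, by linarith, ?_, ?_⟩
    · have heq : (0 - r*c)^2 + (r+ε+1 - r*s)^2 = r^2*c^2 + (r+ε+1 - r*s)^2 := by ring
      rw [heq]; exact arc_lt_aux ε _ _ hcc
    · have heq : (0 + r*c)^2 + (r+ε+1 - r*s)^2 = r^2*c^2 + (r+ε+1 - r*s)^2 := by ring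
      rw [heq]; exact arc_lt_aux ε _ _ hcc
  have hztopC : ztop ∈ C := by
    rw [hCdef, Set.mem_setOf_eq]
    have h4 : ‖ztop‖ = r+ε+1 := by
      refine arc_sq_eq _ _ (norm_nonneg _) (by linarith) ?_
      rw [e2_norm_sq, hztop0, hztop1]; ring
    rw [h4]; linarith
  -- M1 is path connected (star-shaped about the origin)
  have hM1path : IsPathConnected M1 := by
    refine ⟨0, h0M1, ?_⟩
    intro y hy
    refine (arc_seg_joined M1 y 0 ?_).symm
    intro z hz
    obtain ⟨t, ht0, ht1, hz0, hz1⟩ := arc_seg_mem hz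
    rw [hM1def, Set.mem_setOf_eq] at hy ⊢
    obtain ⟨hys, hyb, hyp, hym⟩ := hy
    have hy1 : 0 ≤ y 1 := arc_b_nonneg c s (y 1) |y 0| hc (abs_nonneg _) hs.le hys
    have hz0' : z 0 = (1-t) * y 0 := by rw [hz0]; show _ = _; simp
    have hz1' : z 1 = (1-t) * y 1 := by rw [hz1]; show _ = _; simp
    have hu0 : 0 ≤ 1 - t := by linarith
    have hu1 : 1 - t ≤ 1 := by linarith
    refine ⟨?_, ?_, ?_, ?_⟩
    · rw [hz0', hz1', abs_mul, abs_of_nonneg hu0]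
      calc (1-t) * |y 0| * s = (1-t) * (|y 0| * s) := by ring
      _ ≤ (1-t) * (y 1 * c) := mul_le_mul_of_nonneg_left hys hu0
      _ = (1-t) * y 1 * c := by ring
    · rw [hz1']; exact arc_shrink (1-t) (y 1) (r*s) hu1 hy1 hyb
    · have h4 := arc_key2 r c s ε (y 0) (y 1) (1-t) hr hc hs hcs hε0 hε hys hyb hyp hu0 hu1
      rw [hz0', hz1']; exact h4
    · have hsecn : |(-(y 0))| * s ≤ y 1 * c := by rw [abs_neg]; exact hys
      have hdn : ε^2 < (-(y 0) - r*c)^2 + (y 1 - r*s)^2 := by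
        have heq : (-(y 0) - r*c)^2 = (y 0 + r*c)^2 := by ring
        rw [heq]; exact hym
      have h4 := arc_key2 r c s ε (-(y 0)) (y 1) (1-t) hr hc hs hcs hε0 hε hsecn hyb hdn hu0 hu1
      have heq2 : ((1-t)*(-(y 0)) - r*c)^2 = ((1-t)*(y 0) + r*c)^2 := by ring
      rw [heq2] at h4
      rw [hz0', hz1']; exact h4
  -- M2 is path connected
  have hM2path : IsPathConnected M2 := by
    refine ⟨zmid, hzmidM2, ?_⟩
    intro y hy
    rw [hM2def, Set.mem_setOf_eq] at hy
    obtain ⟨hys, hyb, hyp, hym⟩ := hy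
    have hrs0 : 0 < r*s := mul_pos hr hs
    have hy1 : 0 ≤ y 1 := le_trans hrs0.le hyb
    obtain ⟨H, hHd⟩ : ∃ H : ℝ, H = max (y 1) (r*s + ε) + 1 := ⟨_, rfl⟩
    have hHy : y 1 + 1 ≤ H := by
      rw [hHd]; have := le_max_left (y 1) (r*s + ε); linarith
    have hHε : r*s + ε + 1 ≤ H := by
      rw [hHd]; have := le_max_right (y 1) (r*s + ε); linarith
    obtain ⟨w1, hw1d⟩ : ∃ p : E2, p = WithLp.toLp 2 ![y 0, H] := ⟨_, rfl⟩
    have hw10 : w1 0 = y 0 := by rw [hw1d]; rfl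
    have hw11 : w1 1 = H := by rw [hw1d]; rfl
    obtain ⟨w2, hw2d⟩ : ∃ p : E2, p = WithLp.toLp 2 ![0, H] := ⟨_, rfl⟩
    have hw20 : w2 0 = 0 := by rw [hw2d]; rfl
    have hw21 : w2 1 = H := by rw [hw2d]; rfl
    have J1 : JoinedIn M2 y w1 := by
      apply arc_seg_joined
      intro z hz
      obtain ⟨t, ht0, ht1, hz0, hz1⟩ := arc_seg_mem hz
      rw [hw10] at hz0
      rw [hw11] at hz1
      have hz0' : z 0 = y 0 := by rw [hz0]; ring
      have hzge : y 1 ≤ z 1 := by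
        rw [hz1]; exact arc_up t (y 1) H ht0 (by linarith)
      have hzrs : r*s ≤ z 1 := le_trans hyb hzge
      rw [hM2def, Set.mem_setOf_eq, hz0']
      have h5 : (y 1 - r*s)^2 ≤ (z 1 - r*s)^2 :=
        arc_sq_mono (y 1 - r*s) (z 1 - r*s) (by linarith) (by linarith)
      exact ⟨le_trans hys (mul_le_mul_of_nonneg_right hzge hc.le), hzrs,
        by linarith, by linarith⟩
    have J2 : JoinedIn M2 w1 w2 := by
      apply arc_seg_joined
      intro z hz
      obtain ⟨t, ht0, ht1, hz0, hz1⟩ := arc_seg_mem hz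
      rw [hw10, hw20] at hz0
      rw [hw11, hw21] at hz1
      have hz1' : z 1 = H := by rw [hz1]; ring
      have hz0' : z 0 = (1-t) * y 0 := by rw [hz0]; ring
      have habs : |z 0| ≤ |y 0| := by
        rw [hz0', abs_mul, abs_of_nonneg (by linarith : (0:ℝ) ≤ 1-t)]
        exact arc_shrink (1-t) |y 0| |y 0| (by linarith) (abs_nonneg _) le_rfl
      have hHrs : r*s ≤ H := by linarith
      rw [hM2def, Set.mem_setOf_eq, hz1']
      have hsecz : |z 0| * s ≤ H * c := by
        calc |z 0| * s ≤ |y 0| * s := mul_le_mul_of_nonneg_right habs hs.le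
        _ ≤ y 1 * c := hys
        _ ≤ H * c := mul_le_mul_of_nonneg_right (by linarith) hc.le
      have hHbig : ε^2 < (H - r*s)^2 := arc_eps_sq ε (H - r*s) hε0 (by linarith)
      exact ⟨hsecz, hHrs, arc_lt_aux' ε _ _ hHbig, arc_lt_aux' ε _ _ hHbig⟩
    have J3 : JoinedIn M2 w2 zmid := by
      apply arc_seg_joined
      intro z hz
      obtain ⟨t, ht0, ht1, hz0, hz1⟩ := arc_seg_mem hz
      rw [hw20, hzmid0] at hz0
      rw [hw21, hzmid1] at hz1
      have hz0' : z 0 = 0 := by rw [hz0]; ring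
      have hzge : r*s ≤ z 1 := by
        rw [hz1]; exact arc_down t H (r*s) ht1 (by linarith)
      rw [hM2def, Set.mem_setOf_eq, hz0']
      refine ⟨by rw [abs_zero, zero_mul]; exact mul_nonneg (by linarith) hc.le, hzge, ?_, ?_⟩
      · have heq : (0 - r*c)^2 + (z 1 - r*s)^2 = r^2*c^2 + (z 1 - r*s)^2 := by ring
        rw [heq]; exact arc_lt_aux ε _ _ hcc
      · have heq : (0 + r*c)^2 + (z 1 - r*s)^2 = r^2*c^2 + (z 1 - r*s)^2 := by ring
        rw [heq]; exact arc_lt_aux ε _ _ hcc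
    exact (((J1.trans J2).trans J3)).symm
  -- assemble
  have hMpre : IsPreconnected (M1 ∪ M2) :=
    IsPreconnected.union zmid hzmidM1 hzmidM2 hM1path.isConnected.isPreconnected
      hM2path.isConnected.isPreconnected
  have hApre : IsPreconnected A := by
    rw [hAdef]; exact (convex_ball (0:E2) (r-ε)).isPreconnected
  have hAMpre : IsPreconnected (A ∪ (M1 ∪ M2)) :=
    IsPreconnected.union 0 h0A (Or.inl h0M1) hApre hMpre
  have hCpre : IsPreconnected C := by
    rw [hCdef]; exact arc_outer_preconnected (r+ε) (by linarith)
  have hXpre : IsPreconnected (A ∪ (M1 ∪ M2) ∪ C) :=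
    IsPreconnected.union ztop (Or.inr (Or.inr hztopM2)) hztopC hAMpre hCpre
  have hXeq : (Metric.cthickening ε S)ᶜ = A ∪ (M1 ∪ M2) ∪ C :=
    Set.Subset.antisymm hcover
      (Set.union_subset (Set.union_subset hAX (Set.union_subset hM1X hM2X)) hCX)
  rw [hXeq]
  exact ⟨⟨0, Or.inl (Or.inl h0A)⟩, hXpre⟩
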